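/- Let Φ̄ denote the upper tail of the standard normal distribution, Φ̄(x) = ∫_x^∞ (1/√(2π)) e^{-ζ²/2} dζ. If f : (0,∞) → (0,∞) is differentiable with f'(t) = Φ̄(f(t)) for all sufficiently large t and f(t) → ∞, then f(t)/√(2 log t) → 1 as t → ∞. -/

import Mathlib

open Filter Set Real MeasureTheory


lemma gauss_integrable : Integrable (fun ζ : ℝ => Real.exp (-ζ ^ 2 / 2)) := by
  have := integrable_exp_neg_mul_sq (b := (1/2 : ℝ)) (by norm_num)
  convert this using 2 with x
  ring_nf

lemma gauss_deriv (ζ : ℝ) :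
    HasDerivAt (fun ζ : ℝ => -Real.exp (-ζ ^ 2 / 2)) (ζ * Real.exp (-ζ ^ 2 / 2)) ζ := by
  have h1 : HasDerivAt (fun ζ : ℝ => -ζ ^ 2 / 2) (-ζ) ζ := by
    have := ((hasDerivAt_pow 2 ζ).neg).div_const 2
    refine this.congr_deriv ?_
    simp; ring
  have := (h1.exp).neg
  refine this.congr_deriv ?_
  ring

lemma gauss_tendsto : Tendsto (fun ζ : ℝ => -Real.exp (-ζ ^ 2 / 2)) atTop (nhds 0) := by
  rw [show (0:ℝ) = -0 by ring]
  apply Tendsto.neg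
  apply Real.tendsto_exp_atBot.comp
  apply Tendsto.atBot_div_const (by norm_num)
  exact tendsto_neg_atBot_iff.mpr (tendsto_pow_atTop (by norm_num))

lemma gauss_moment_integrable {x : ℝ} (hx : 0 ≤ x) :
    IntegrableOn (fun ζ : ℝ => ζ * Real.exp (-ζ ^ 2 / 2)) (Ioi x) := by
  exact integrableOn_Ioi_deriv_of_nonneg' (fun ζ _ => gauss_deriv ζ)
    (fun ζ hζ => mul_nonneg (le_of_lt (lt_of_le_of_lt hx hζ)) (Real.exp_nonneg _)) gauss_tendsto

lemma gauss_moment_integral {x : ℝ} (hx : 0 ≤ x) :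
    ∫ ζ in Ioi x, ζ * Real.exp (-ζ ^ 2 / 2) = Real.exp (-x ^ 2 / 2) := by
  have h := integral_Ioi_of_hasDerivAt_of_nonneg' (a := x) (l := 0)
    (g := fun ζ : ℝ => -Real.exp (-ζ ^ 2 / 2)) (g' := fun ζ => ζ * Real.exp (-ζ ^ 2 / 2))
    (fun ζ _ => gauss_deriv ζ)
    (fun ζ hζ => mul_nonneg (le_of_lt (lt_of_le_of_lt hx hζ)) (Real.exp_nonneg _)) gauss_tendsto
  rw [h]; ring

lemma gauss_upper {x : ℝ} (hx : 0 < x) :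
    x * ∫ ζ in Ioi x, Real.exp (-ζ ^ 2 / 2) ≤ Real.exp (-x ^ 2 / 2) := by
  rw [← gauss_moment_integral hx.le, ← integral_const_mul]
  apply setIntegral_mono_on (gauss_integrable.integrableOn.const_mul x)
    (gauss_moment_integrable hx.le) measurableSet_Ioi
  intro ζ hζ
  exact mul_le_mul_of_nonneg_right (le_of_lt hζ) (Real.exp_nonneg _)

lemma gauss_lower {x : ℝ} (hx : 1 ≤ x) :
    Real.exp (-3/2) * Real.exp (-x ^ 2 / 2) ≤ x * ∫ ζ in Ioi x, Real.exp (-ζ ^ 2 / 2) := by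
  have hx0 : 0 < x := lt_of_lt_of_le one_pos hx
  have hsub : Ioc x (x + 1/x) ⊆ Ioi x := Ioc_subset_Ioi_self
  have h1 : ∫ ζ in Ioc x (x + 1/x), Real.exp (-ζ ^ 2 / 2) ≤
      ∫ ζ in Ioi x, Real.exp (-ζ ^ 2 / 2) := by
    apply setIntegral_mono_set gauss_integrable.integrableOn
      (Eventually.of_forall fun ζ => Real.exp_nonneg _) (HasSubset.Subset.eventuallyLE hsub)
  have h2 : Real.exp (-(x + 1/x) ^ 2 / 2) * (1/x) ≤
      ∫ ζ in Ioc x (x + 1/x), Real.exp (-ζ ^ 2 / 2) := by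
    have := setIntegral_ge_of_const_le (μ := volume) (s := Ioc x (x + 1/x))
      (f := fun ζ => Real.exp (-ζ ^ 2 / 2)) (c := Real.exp (-(x + 1/x) ^ 2 / 2))
      measurableSet_Ioc (by simp) ?_ gauss_integrable.integrableOn
    · refine le_trans (le_of_eq ?_) this
      rw [smul_eq_mul, mul_comm, measureReal_def, Real.volume_Ioc, show x + 1/x - x = 1/x by ring, ENNReal.toReal_ofReal (by positivity)]
    · intro ζ hζ
      apply Real.exp_le_exp.mpr
      have h3 : ζ ≤ x + 1/x := hζ.2
      have h4 : 0 < ζ := lt_trans hx0 hζ.1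
      nlinarith [sq_nonneg (ζ + (x + 1/x))]
  have h5 : Real.exp (-3/2) * Real.exp (-x ^ 2 / 2) ≤ Real.exp (-(x + 1/x) ^ 2 / 2) := by
    rw [← Real.exp_add]
    apply Real.exp_le_exp.mpr
    have h6 : 0 < x^2 := by positivity
    have h7 : 1/x^2 ≤ 1 := by
      rw [div_le_one h6]; nlinarith
    field_simp
    nlinarith
  calc Real.exp (-3/2) * Real.exp (-x ^ 2 / 2)
      ≤ Real.exp (-(x + 1/x) ^ 2 / 2) := h5
    _ ≤ x * (Real.exp (-(x + 1/x) ^ 2 / 2) * (1/x)) := by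
        rw [show x * (Real.exp (-(x + 1/x) ^ 2 / 2) * (1/x)) = Real.exp (-(x + 1/x) ^ 2 / 2) * (x * (1/x)) by ring, mul_one_div, div_self (ne_of_gt hx0), mul_one]
    _ ≤ x * ∫ ζ in Ioc x (x + 1/x), Real.exp (-ζ ^ 2 / 2) := by
        exact mul_le_mul_of_nonneg_left h2 hx0.le
    _ ≤ x * ∫ ζ in Ioi x, Real.exp (-ζ ^ 2 / 2) := mul_le_mul_of_nonneg_left h1 hx0.le


-- ratio lemma: log (b + a*(t - T)) / log t → 1
lemma log_affine_ratio {a b T : ℝ} (ha : 0 < a) (hb : 0 < b) :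
    Tendsto (fun t => Real.log (b + a * (t - T)) / Real.log t) atTop (nhds 1) := by
  have h1 : Tendsto (fun t => (b + a * (t - T)) / t) atTop (nhds a) := by
    have : ∀ᶠ t : ℝ in atTop, (b + a * (t - T)) / t = a + (b - a * T) / t := by
      filter_upwards [eventually_gt_atTop 0] with t ht
      field_simp
      ring
    rw [tendsto_congr' this]
    have := tendsto_const_nhds (x := a) (f := atTop (α := ℝ)) |>.add
      ((tendsto_const_nhds (x := b - a * T)).div_atTop tendsto_id)
    simpa using this
  have h2 : Tendsto (fun t => Real.log ((b + a * (t - T)) / t)) atTop (nhds (Real.log a)) :=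
    ((Real.continuousAt_log (ne_of_gt ha)).tendsto).comp h1
  have h3 : Tendsto (fun t => Real.log ((b + a * (t - T)) / t) / Real.log t) atTop (nhds 0) :=
    h2.div_atTop Real.tendsto_log_atTop
  have h4 : ∀ᶠ t : ℝ in atTop,
      Real.log (b + a * (t - T)) / Real.log t = 1 + Real.log ((b + a * (t - T)) / t) / Real.log t := by
    filter_upwards [eventually_gt_atTop (max 1 (T + 1)), eventually_gt_atTop (max T (T + b/a))] with t ht ht2
    have ht1 : 1 < t := lt_of_le_of_lt (le_max_left _ _) ht
    have hlt : 0 < Real.log t := Real.log_pos ht1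
    have hnum : 0 < b + a * (t - T) := by
      have : T < t := lt_of_le_of_lt (le_max_left _ _) ht2
      nlinarith
    rw [Real.log_div (ne_of_gt hnum) (by linarith)]
    field_simp
    ring
  rw [tendsto_congr' h4]
  have := (tendsto_const_nhds (x := (1:ℝ)) (f := atTop (α := ℝ))).add h3
  simpa using this


theorem stmt_11 (Phi : ℝ → ℝ)
    (hPhi : ∀ x, Phi x = ∫ ζ in Ioi x, (Real.sqrt (2 * Real.pi))⁻¹ * Real.exp (-ζ ^ 2 / 2))
    (f : ℝ → ℝ) (hfpos : ∀ t, 0 < t → 0 < f t)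
    (hode : ∃ t₀, ∀ t ≥ t₀, HasDerivAt f (Phi (f t)) t)
    (hftop : Tendsto f atTop atTop) :
    Tendsto (fun t => f t / Real.sqrt (2 * Real.log t)) atTop (nhds 1) := by
  obtain ⟨t₀, hode⟩ := hode
  set c₂ : ℝ := (Real.sqrt (2 * Real.pi))⁻¹ with hc₂def
  have hc₂pos : 0 < c₂ := inv_pos.mpr (Real.sqrt_pos.mpr (by positivity))
  set c₁ : ℝ := Real.exp (-3/2) * c₂ with hc₁def
  have hc₁pos : 0 < c₁ := mul_pos (Real.exp_pos _) hc₂pos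
  have hPhi' : ∀ x, Phi x = c₂ * ∫ ζ in Ioi x, Real.exp (-ζ ^ 2 / 2) := fun x => by
    rw [hPhi x, MeasureTheory.integral_const_mul]
  have hub : ∀ x, 1 ≤ x → x * Phi x ≤ c₂ * Real.exp (-x ^ 2 / 2) := by
    intro x hx
    rw [hPhi' x, show x * (c₂ * ∫ ζ in Ioi x, Real.exp (-ζ ^ 2 / 2)) =
      c₂ * (x * ∫ ζ in Ioi x, Real.exp (-ζ ^ 2 / 2)) by ring]
    exact mul_le_mul_of_nonneg_left (gauss_upper (lt_of_lt_of_le one_pos hx)) hc₂pos.le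
  have hlb : ∀ x, 1 ≤ x → c₁ * Real.exp (-x ^ 2 / 2) ≤ x * Phi x := by
    intro x hx
    rw [hPhi' x, show x * (c₂ * ∫ ζ in Ioi x, Real.exp (-ζ ^ 2 / 2)) =
      c₂ * (x * ∫ ζ in Ioi x, Real.exp (-ζ ^ 2 / 2)) by ring, hc₁def,
      show Real.exp (-3/2) * c₂ * Real.exp (-x ^ 2 / 2) =
        c₂ * (Real.exp (-3/2) * Real.exp (-x ^ 2 / 2)) by ring]
    exact mul_le_mul_of_nonneg_left (gauss_lower hx) hc₂pos.le
  -- derivative of H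
  have hH : ∀ t, t₀ ≤ t →
      HasDerivAt (fun t => Real.exp (f t ^ 2 / 2)) (f t * Phi (f t) * Real.exp (f t ^ 2 / 2)) t := by
    intro t ht
    have h := (((hode t ht).pow 2).div_const 2).exp
    convert h using 1
    simp [Pi.pow_apply]
    ring
    rfl
  -- threshold T
  have hev : ∀ᶠ t : ℝ in atTop, 1 ≤ f t ∧ t₀ ≤ t ∧ 1 ≤ t :=
    (hftop.eventually_ge_atTop 1).and ((eventually_ge_atTop t₀).and (eventually_ge_atTop 1))
  rw [eventually_atTop] at hev
  obtain ⟨T, hT⟩ := hev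
  -- derivative bounds on [T, ∞)
  have hdub : ∀ t, T ≤ t → f t * Phi (f t) * Real.exp (f t ^ 2 / 2) ≤ c₂ := by
    intro t ht
    obtain ⟨hf1, _, _⟩ := hT t ht
    have := mul_le_mul_of_nonneg_right (hub (f t) hf1) (Real.exp_nonneg (f t ^ 2 / 2))
    calc f t * Phi (f t) * Real.exp (f t ^ 2 / 2)
        ≤ c₂ * Real.exp (-f t ^ 2 / 2) * Real.exp (f t ^ 2 / 2) := this
      _ = c₂ := by
          rw [mul_assoc, ← Real.exp_add, show -f t ^ 2 / 2 + f t ^ 2 / 2 = 0 by ring,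
            Real.exp_zero, mul_one]
  have hdlb : ∀ t, T ≤ t → c₁ ≤ f t * Phi (f t) * Real.exp (f t ^ 2 / 2) := by
    intro t ht
    obtain ⟨hf1, _, _⟩ := hT t ht
    have := mul_le_mul_of_nonneg_right (hlb (f t) hf1) (Real.exp_nonneg (f t ^ 2 / 2))
    calc c₁ = c₁ * Real.exp (-f t ^ 2 / 2) * Real.exp (f t ^ 2 / 2) := by
          rw [mul_assoc, ← Real.exp_add, show -f t ^ 2 / 2 + f t ^ 2 / 2 = 0 by ring,
            Real.exp_zero, mul_one]
      _ ≤ f t * Phi (f t) * Real.exp (f t ^ 2 / 2) := this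
  -- monotone bounds on H
  have hHd : ∀ t ∈ Ici T, HasDerivAt (fun t => Real.exp (f t ^ 2 / 2))
      (f t * Phi (f t) * Real.exp (f t ^ 2 / 2)) t :=
    fun t ht => hH t (le_trans (hT T le_rfl).2.1 ht)
  have mono₁ : MonotoneOn (fun t => Real.exp (f t ^ 2 / 2) - c₁ * t) (Ici T) := by
    apply monotoneOn_of_deriv_nonneg (convex_Ici T)
    · exact fun t ht => ((hHd t ht).sub ((hasDerivAt_id t).const_mul c₁)).continuousAt.continuousWithinAt
    · intro t ht
      rw [interior_Ici] at ht
      exact (((hHd t (Ioi_subset_Ici_self ht)).sub ((hasDerivAt_id t).const_mul c₁))).differentiableAt.differentiableWithinAt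
    · intro t ht
      rw [interior_Ici] at ht
      have hd : HasDerivAt (fun s => Real.exp (f s ^ 2 / 2) - c₁ * s)
          (f t * Phi (f t) * Real.exp (f t ^ 2 / 2) - c₁ * 1) t :=
        (hHd t (Ioi_subset_Ici_self ht)).sub ((hasDerivAt_id t).const_mul c₁)
      rw [hd.deriv]
      simp only [mul_one]
      linarith [hdlb t (le_of_lt ht)]
  have mono₂ : MonotoneOn (fun t => c₂ * t - Real.exp (f t ^ 2 / 2)) (Ici T) := by
    apply monotoneOn_of_deriv_nonneg (convex_Ici T)
    · exact fun t ht => (((hasDerivAt_id t).const_mul c₂).sub (hHd t ht)).continuousAt.continuousWithinAt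
    · intro t ht
      rw [interior_Ici] at ht
      exact (((hasDerivAt_id t).const_mul c₂).sub (hHd t (Ioi_subset_Ici_self ht))).differentiableAt.differentiableWithinAt
    · intro t ht
      rw [interior_Ici] at ht
      have hd : HasDerivAt (fun s => c₂ * s - Real.exp (f s ^ 2 / 2))
          (c₂ * 1 - f t * Phi (f t) * Real.exp (f t ^ 2 / 2)) t :=
        ((hasDerivAt_id t).const_mul c₂).sub (hHd t (Ioi_subset_Ici_self ht))
      rw [hd.deriv]
      simp only [mul_one]
      linarith [hdub t (le_of_lt ht)]
  set B := Real.exp (f T ^ 2 / 2) with hBdef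
  have hBpos : 0 < B := Real.exp_pos _
  have hHlb : ∀ t, T ≤ t → B + c₁ * (t - T) ≤ Real.exp (f t ^ 2 / 2) := by
    intro t ht
    have := mono₁ (self_mem_Ici) ht ht
    simp only at this
    nlinarith [this]
  have hHub : ∀ t, T ≤ t → Real.exp (f t ^ 2 / 2) ≤ B + c₂ * (t - T) := by
    intro t ht
    have := mono₂ (self_mem_Ici) ht ht
    simp only at this
    nlinarith [this]
  -- squeeze for log H / log t
  have hsq : Tendsto (fun t => f t ^ 2 / (2 * Real.log t)) atTop (nhds 1) := by
    have hlow := log_affine_ratio (T := T) hc₁pos hBpos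
    have hhigh := log_affine_ratio (T := T) hc₂pos hBpos
    apply tendsto_of_tendsto_of_tendsto_of_le_of_le' hlow hhigh
    · filter_upwards [eventually_ge_atTop T, eventually_gt_atTop 1] with t ht ht1
      have hlogt : 0 < Real.log t := Real.log_pos ht1
      have h1 : B + c₁ * (t - T) ≤ Real.exp (f t ^ 2 / 2) := hHlb t ht
      have h2 : 0 < B + c₁ * (t - T) := by nlinarith [hc₁pos]
      have h3 : Real.log (B + c₁ * (t - T)) ≤ f t ^ 2 / 2 := by
        calc Real.log (B + c₁ * (t - T)) ≤ Real.log (Real.exp (f t ^ 2 / 2)) :=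
              Real.log_le_log h2 h1
          _ = f t ^ 2 / 2 := Real.log_exp _
      rw [div_le_div_iff₀ hlogt (by positivity)]
      calc Real.log (B + c₁ * (t - T)) * (2 * Real.log t)
          ≤ (f t ^ 2 / 2) * (2 * Real.log t) := by nlinarith
        _ = f t ^ 2 * Real.log t := by ring
    · filter_upwards [eventually_ge_atTop T, eventually_gt_atTop 1] with t ht ht1
      have hlogt : 0 < Real.log t := Real.log_pos ht1
      have h1 : Real.exp (f t ^ 2 / 2) ≤ B + c₂ * (t - T) := hHub t ht
      have h2 : 0 < B + c₂ * (t - T) := lt_of_lt_of_le (Real.exp_pos _) h1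
      have h3 : f t ^ 2 / 2 ≤ Real.log (B + c₂ * (t - T)) := by
        calc f t ^ 2 / 2 = Real.log (Real.exp (f t ^ 2 / 2)) := (Real.log_exp _).symm
          _ ≤ Real.log (B + c₂ * (t - T)) := Real.log_le_log (Real.exp_pos _) h1
      rw [div_le_div_iff₀ (by positivity) hlogt]
      calc f t ^ 2 * Real.log t = (f t ^ 2 / 2) * (2 * Real.log t) := by ring
        _ ≤ Real.log (B + c₂ * (t - T)) * (2 * Real.log t) := by nlinarith
  -- conclude via sqrt
  have hsqrt := hsq.sqrt
  rw [Real.sqrt_one] at hsqrt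
  apply hsqrt.congr'
  filter_upwards [eventually_gt_atTop (max 0 1)] with t ht
  have ht0 : 0 < t := lt_of_le_of_lt (le_max_left _ _) ht
  have hft : 0 < f t := hfpos t ht0
  rw [Real.sqrt_div (by positivity), Real.sqrt_sq hft.le]
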